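/- Let Σ be a finite alphabet, let # be a symbol not in Σ, let N be a natural number, and let L₁, L₂ ⊆ Σ* be regular languages. Then the language { x · # · reverse(y) : x ∈ L₁, y ∈ L₂, and the edit distance between x and y is at most N } is generated by a linear context-free grammar. -/

import Mathlib

/-- Costs for the Levenshtein edit distance (removed from Mathlib; restored with its old meaning). -/
structure Levenshtein.Cost (α β δ : Type*) where
  delete : α → δ
  insert : β → δ
  substitute : α → β → δ

/-- The default cost structure: each operation costs 1, substituting a symbol by itself costs 0. -/
def Levenshtein.defaultCost {α : Type*} [DecidableEq α] : Levenshtein.Cost α α ℕ where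
  delete _ := 1
  insert _ := 1
  substitute a b := if a = b then 0 else 1

/-- The Levenshtein distance, by the recursion characterising the old Mathlib definition. -/
def levenshtein {α β δ : Type*} [AddZeroClass δ] [Min δ] (C : Levenshtein.Cost α β δ) :
    List α → List β → δ
  | [], [] => 0
  | [], y :: ys => C.insert y + levenshtein C [] ys
  | x :: xs, [] => C.delete x + levenshtein C xs []
  | x :: xs, y :: ys =>
      min (C.delete x + levenshtein C xs (y :: ys))
        (min (C.insert y + levenshtein C (x :: xs) ys) (C.substitute x y + levenshtein C xs ys))

/-- A context-free grammar is *linear* if every production contains at most one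
nonterminal in its right-hand side. -/
def IsLinearCFG {T : Type} (g : ContextFreeGrammar T) : Prop :=
  ∀ r ∈ g.rules,
    (r.output.countP fun s =>
      match s with
      | Symbol.nonterminal _ => true
      | Symbol.terminal _ => false) ≤ 1

@[simp] theorem Levenshtein.defaultCost_delete {α : Type*} [DecidableEq α] (a : α) :
    (Levenshtein.defaultCost : Levenshtein.Cost α α ℕ).delete a = 1 := rfl

@[simp] theorem Levenshtein.defaultCost_insert {α : Type*} [DecidableEq α] (a : α) :
    (Levenshtein.defaultCost : Levenshtein.Cost α α ℕ).insert a = 1 := rfl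

@[simp] theorem Levenshtein.defaultCost_substitute {α : Type*} [DecidableEq α] (a b : α) :
    (Levenshtein.defaultCost : Levenshtein.Cost α α ℕ).substitute a b = if a = b then 0 else 1 := rfl

@[simp] theorem levenshtein_nil_nil {α β δ : Type*} [AddZeroClass δ] [Min δ]
    (C : Levenshtein.Cost α β δ) : levenshtein C [] [] = 0 := by rw [levenshtein]

theorem levenshtein_nil_cons {α β δ : Type*} [AddZeroClass δ] [Min δ]
    (C : Levenshtein.Cost α β δ) (y : β) (ys : List β) :
    levenshtein C [] (y :: ys) = C.insert y + levenshtein C [] ys := by rw [levenshtein]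

theorem levenshtein_cons_nil {α β δ : Type*} [AddZeroClass δ] [Min δ]
    (C : Levenshtein.Cost α β δ) (x : α) (xs : List α) :
    levenshtein C (x :: xs) [] = C.delete x + levenshtein C xs [] := by rw [levenshtein]

theorem levenshtein_cons_cons {α β δ : Type*} [AddZeroClass δ] [Min δ]
    (C : Levenshtein.Cost α β δ) (x : α) (xs : List α) (y : β) (ys : List β) :
    levenshtein C (x :: xs) (y :: ys) =
      min (C.delete x + levenshtein C xs (y :: ys))
        (min (C.insert y + levenshtein C (x :: xs) ys) (C.substitute x y + levenshtein C xs ys)) := by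
  rw [levenshtein]

namespace EDLin

set_option linter.unusedSectionVars false
set_option maxHeartbeats 1000000

/-- `Al k x y` : there is an alignment of `x` and `y` of cost at most `k`. -/
inductive Al {β : Type} : ℕ → List β → List β → Prop
  | nil (k : ℕ) : Al k [] []
  | del (a : β) {k x y} : Al k x y → Al (k + 1) (a :: x) y
  | ins (b : β) {k x y} : Al k x y → Al (k + 1) x (b :: y)
  | eq (a : β) {k x y} : Al k x y → Al k (a :: x) (a :: y)
  | sub (a b : β) {k x y} : Al k x y → Al (k + 1) (a :: x) (b :: y)

variable {α : Type} [DecidableEq α]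

theorem lev_le_of_al : ∀ {k} {x y : List α}, Al k x y →
    levenshtein Levenshtein.defaultCost x y ≤ k := by
  intro k x y h
  induction h with
  | nil k => simp
  | del a h ih =>
      rename_i k x y
      cases y with
      | nil =>
          rw [levenshtein_cons_nil]
          simp only [Levenshtein.defaultCost_delete]
          omega
      | cons b ys =>
          rw [levenshtein_cons_cons]
          refine le_trans (min_le_left _ _) ?_
          simp only [Levenshtein.defaultCost_delete]
          omega
  | ins b h ih =>
      rename_i k x y
      cases x with
      | nil =>
          rw [levenshtein_nil_cons]
          simp only [Levenshtein.defaultCost_insert]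
          omega
      | cons a xs =>
          rw [levenshtein_cons_cons]
          refine le_trans (min_le_right _ _) (le_trans (min_le_left _ _) ?_)
          simp only [Levenshtein.defaultCost_insert]
          omega
  | eq a h ih =>
      rw [levenshtein_cons_cons]
      refine le_trans (min_le_right _ _) (le_trans (min_le_right _ _) ?_)
      simp only [Levenshtein.defaultCost_substitute, if_true, eq_self_iff_true]
      omega
  | sub a b h ih =>
      rw [levenshtein_cons_cons]
      refine le_trans (min_le_right _ _) (le_trans (min_le_right _ _) ?_)
      simp only [Levenshtein.defaultCost_substitute]
      by_cases hab : a = b <;> simp [hab] <;> omega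

theorem al_lev : ∀ x y : List α, Al (levenshtein Levenshtein.defaultCost x y) x y := by
  intro x
  induction x with
  | nil =>
      intro y
      induction y with
      | nil => simpa using Al.nil 0
      | cons b ys ih =>
          rw [levenshtein_nil_cons]
          simpa [Nat.add_comm] using Al.ins b ih
  | cons a xs ihx =>
      intro y
      induction y with
      | nil =>
          rw [levenshtein_cons_nil]
          simpa [Nat.add_comm] using Al.del a (ihx [])
      | cons b ys ihy =>
          rw [levenshtein_cons_cons]
          set A := (Levenshtein.defaultCost : Levenshtein.Cost α α ℕ).delete a +
            levenshtein Levenshtein.defaultCost xs (b :: ys) with hA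
          set B := (Levenshtein.defaultCost : Levenshtein.Cost α α ℕ).insert b +
            levenshtein Levenshtein.defaultCost (a :: xs) ys with hB
          set C := (Levenshtein.defaultCost : Levenshtein.Cost α α ℕ).substitute a b +
            levenshtein Levenshtein.defaultCost xs ys with hC
          have : min A (min B C) = A ∨ min A (min B C) = B ∨ min A (min B C) = C := by
            rcases min_cases A (min B C) with ⟨h, _⟩ | ⟨h, _⟩
            · exact Or.inl h
            · rcases min_cases B C with ⟨h', _⟩ | ⟨h', _⟩
              · exact Or.inr (Or.inl (h.trans h'))
              · exact Or.inr (Or.inr (h.trans h'))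
          rcases this with h | h | h <;> rw [h]
          · rw [hA]; simpa [Nat.add_comm] using Al.del a (ihx (b :: ys))
          · rw [hB]; simpa [Nat.add_comm] using Al.ins b ihy
          · rw [hC]
            by_cases hab : a = b
            · subst hab
              simpa [Levenshtein.defaultCost] using Al.eq a (ihx ys)
            · simpa [Levenshtein.defaultCost, hab, Nat.add_comm] using Al.sub a b (ihx ys)

theorem Al.snoc_del (a : α) : ∀ {k x y}, Al k x y → Al (k + 1) (x ++ [a]) y := by
  intro k x y h
  induction h with
  | nil k => exact Al.del a (Al.nil k)
  | del c h ih => exact Al.del c ih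
  | ins c h ih => exact Al.ins c ih
  | eq c h ih => exact Al.eq c ih
  | sub c d h ih => exact Al.sub c d ih

theorem Al.snoc_ins (b : α) : ∀ {k x y}, Al k x y → Al (k + 1) x (y ++ [b]) := by
  intro k x y h
  induction h with
  | nil k => exact Al.ins b (Al.nil k)
  | del c h ih => exact Al.del c ih
  | ins c h ih => exact Al.ins c ih
  | eq c h ih => exact Al.eq c ih
  | sub c d h ih => exact Al.sub c d ih

theorem Al.snoc_eq (a : α) : ∀ {k x y}, Al k x y → Al k (x ++ [a]) (y ++ [a]) := by
  intro k x y h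
  induction h with
  | nil k => exact Al.eq a (Al.nil k)
  | del c h ih => exact Al.del c ih
  | ins c h ih => exact Al.ins c ih
  | eq c h ih => exact Al.eq c ih
  | sub c d h ih => exact Al.sub c d ih

theorem Al.snoc_sub (a b : α) : ∀ {k x y}, Al k x y → Al (k + 1) (x ++ [a]) (y ++ [b]) := by
  intro k x y h
  induction h with
  | nil k => exact Al.sub a b (Al.nil k)
  | del c h ih => exact Al.del c ih
  | ins c h ih => exact Al.ins c ih
  | eq c h ih => exact Al.eq c ih
  | sub c d h ih => exact Al.sub c d ih

section Grammar

universe uN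

variable [Fintype α] {σ₁ σ₂ : Type} [Fintype σ₁] [Fintype σ₂]

variable (M₁ : DFA α σ₁) (M₂ : DFA α σ₂) (N : ℕ)

/-- nonterminal type (lifted to an arbitrary universe) -/
@[reducible]
def NTT (σ₁ σ₂ : Type) (N : ℕ) : Type uN := ULift.{uN} (σ₁ × σ₂ × Fin (N + 1))

/-- finishing rule -/
def finRule (q : σ₁ × σ₂ × Fin (N + 1)) :
    ContextFreeRule (Option α) (NTT.{0} σ₁ σ₂ N) :=
  ⟨ULift.up q, [Symbol.terminal none]⟩

def delRule (q₁ : σ₁) (q₂ : σ₂) (j : Fin N) (a : α) :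
    ContextFreeRule (Option α) (NTT.{0} σ₁ σ₂ N) :=
  ⟨ULift.up (q₁, q₂, j.succ),
    [Symbol.terminal (some a), Symbol.nonterminal (ULift.up (M₁.step q₁ a, q₂, j.castSucc))]⟩

def insRule (q₁ : σ₁) (q₂ : σ₂) (j : Fin N) (b : α) :
    ContextFreeRule (Option α) (NTT.{0} σ₁ σ₂ N) :=
  ⟨ULift.up (q₁, q₂, j.succ),
    [Symbol.nonterminal (ULift.up (q₁, M₂.step q₂ b, j.castSucc)), Symbol.terminal (some b)]⟩

def eqRule (q₁ : σ₁) (q₂ : σ₂) (k : Fin (N + 1)) (a : α) :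
    ContextFreeRule (Option α) (NTT.{0} σ₁ σ₂ N) :=
  ⟨ULift.up (q₁, q₂, k),
    [Symbol.terminal (some a), Symbol.nonterminal (ULift.up (M₁.step q₁ a, M₂.step q₂ a, k)),
      Symbol.terminal (some a)]⟩

def subRule (q₁ : σ₁) (q₂ : σ₂) (j : Fin N) (a b : α) :
    ContextFreeRule (Option α) (NTT.{0} σ₁ σ₂ N) :=
  ⟨ULift.up (q₁, q₂, j.succ),
    [Symbol.terminal (some a), Symbol.nonterminal (ULift.up (M₁.step q₁ a, M₂.step q₂ b, j.castSucc)),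
      Symbol.terminal (some b)]⟩

noncomputable def rulesF : Finset (ContextFreeRule (Option α) (NTT.{0} σ₁ σ₂ N)) :=
  letI : DecidableEq (ContextFreeRule (Option α) (NTT.{0} σ₁ σ₂ N)) := Classical.decEq _
  letI : DecidablePred (fun q : σ₁ × σ₂ × Fin (N + 1) =>
      q.1 ∈ M₁.accept ∧ q.2.1 ∈ M₂.accept) := fun _ => Classical.propDecidable _
  letI : DecidablePred (fun t : σ₁ × σ₂ × Fin N × α × α =>
      t.2.2.2.1 ≠ t.2.2.2.2) := fun _ => Classical.propDecidable _
  ((Finset.univ.filter fun q : σ₁ × σ₂ × Fin (N + 1) =>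
      q.1 ∈ M₁.accept ∧ q.2.1 ∈ M₂.accept).image (finRule (α := α) N))
  ∪ (Finset.univ.image fun t : σ₁ × σ₂ × Fin N × α =>
      delRule M₁ N t.1 t.2.1 t.2.2.1 t.2.2.2)
  ∪ (Finset.univ.image fun t : σ₁ × σ₂ × Fin N × α =>
      insRule M₂ N t.1 t.2.1 t.2.2.1 t.2.2.2)
  ∪ (Finset.univ.image fun t : σ₁ × σ₂ × Fin (N + 1) × α =>
      eqRule M₁ M₂ N t.1 t.2.1 t.2.2.1 t.2.2.2)
  ∪ ((Finset.univ.filter fun t : σ₁ × σ₂ × Fin N × α × α =>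
      t.2.2.2.1 ≠ t.2.2.2.2).image fun t =>
      subRule M₁ M₂ N t.1 t.2.1 t.2.2.1 t.2.2.2.1 t.2.2.2.2)

def RuleSpec (r : ContextFreeRule (Option α) (NTT.{0} σ₁ σ₂ N)) : Prop :=
  (∃ q₁ q₂ k, (q₁ ∈ M₁.accept ∧ q₂ ∈ M₂.accept) ∧ finRule N (q₁, q₂, k) = r) ∨
  (∃ q₁ q₂ j a, delRule M₁ N q₁ q₂ j a = r) ∨
  (∃ q₁ q₂ j b, insRule M₂ N q₁ q₂ j b = r) ∨
  (∃ q₁ q₂ k a, eqRule M₁ M₂ N q₁ q₂ k a = r) ∨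
  (∃ q₁ q₂ j a b, a ≠ b ∧ subRule M₁ M₂ N q₁ q₂ j a b = r)

lemma mem_rulesF {r : ContextFreeRule (Option α) (NTT.{0} σ₁ σ₂ N)} :
    r ∈ rulesF M₁ M₂ N ↔ RuleSpec M₁ M₂ N r := by
  unfold rulesF RuleSpec
  simp only [Finset.mem_union, Finset.mem_image, Finset.mem_filter, Finset.mem_univ,
    true_and, Prod.exists]
  constructor
  · rintro ((((h | h) | h) | h) | h)
    · exact Or.inl h
    · exact Or.inr (Or.inl h)
    · exact Or.inr (Or.inr (Or.inl h))
    · exact Or.inr (Or.inr (Or.inr (Or.inl h)))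
    · exact Or.inr (Or.inr (Or.inr (Or.inr h)))
  · rintro (h | h | h | h | h)
    · exact Or.inl (Or.inl (Or.inl (Or.inl h)))
    · exact Or.inl (Or.inl (Or.inl (Or.inr h)))
    · exact Or.inl (Or.inl (Or.inr h))
    · exact Or.inl (Or.inr h)
    · exact Or.inr h

@[reducible]
noncomputable def gram : ContextFreeGrammar.{0} (Option α) :=
  ⟨NTT.{0} σ₁ σ₂ N, ULift.up (M₁.start, M₂.start, Fin.last N), rulesF M₁ M₂ N⟩

lemma derives_of_al : ∀ {c : ℕ} {x y : List α}, Al c x y →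
    ∀ (q₁ : σ₁) (q₂ : σ₂) (k : Fin (N + 1)), c ≤ (k : ℕ) →
    M₁.evalFrom q₁ x ∈ M₁.accept → M₂.evalFrom q₂ y ∈ M₂.accept →
    (gram M₁ M₂ N).Derives [Symbol.nonterminal (ULift.up (q₁, q₂, k))]
      (List.map Symbol.terminal (x.map some ++ none :: (y.map some).reverse)) := by
  intro c x y h
  induction h with
  | nil c' =>
      intro q₁ q₂ k _ h1 h2
      rw [DFA.evalFrom_nil] at h1 h2
      have hr : finRule N (q₁, q₂, k) ∈ rulesF M₁ M₂ N :=
        (mem_rulesF M₁ M₂ N).2 (Or.inl ⟨q₁, q₂, k, ⟨h1, h2⟩, rfl⟩)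
      have key : (gram M₁ M₂ N).Produces [Symbol.nonterminal (ULift.up (q₁, q₂, k))]
          (finRule (α := α) N (q₁, q₂, k)).output :=
        ⟨_, hr, ContextFreeRule.Rewrites.input_output⟩
      simpa [finRule] using key.single
  | del a h ih =>
      rename_i c x y
      intro q₁ q₂ k hc h1 h2
      have hk1 : 1 ≤ (k : ℕ) := by omega
      have hkN : (k : ℕ) < N + 1 := k.isLt
      set j : Fin N := ⟨(k : ℕ) - 1, by omega⟩ with hj
      have hjk : j.succ = k := by
        apply Fin.ext
        simp [hj, Fin.val_succ]
        omega
      have hr : delRule M₁ N q₁ q₂ j a ∈ rulesF M₁ M₂ N :=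
        (mem_rulesF M₁ M₂ N).2 (Or.inr (Or.inl ⟨q₁, q₂, j, a, rfl⟩))
      have hin : (Symbol.nonterminal (ULift.up (q₁, q₂, k)) : Symbol (Option α) (NTT.{0} σ₁ σ₂ N))
          = Symbol.nonterminal (delRule M₁ N q₁ q₂ j a).input := by
        simp [delRule, hjk]
      have key : (gram M₁ M₂ N).Produces [Symbol.nonterminal (ULift.up (q₁, q₂, k))]
          (delRule M₁ N q₁ q₂ j a).output := by
        refine ⟨_, hr, ?_⟩
        rw [show [Symbol.nonterminal (ULift.up (q₁, q₂, k))] =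
          [Symbol.nonterminal (delRule M₁ N q₁ q₂ j a).input] from by rw [← hin]]
        exact ContextFreeRule.Rewrites.input_output
      have h1' : M₁.evalFrom (M₁.step q₁ a) x ∈ M₁.accept := h1
      have ihd := ih (M₁.step q₁ a) q₂ j.castSucc (by simp [hj]; omega) h1' h2
      have := ihd.append_left [Symbol.terminal (some a)]
      refine key.trans_derives ?_
      simpa [delRule] using this
  | ins b h ih =>
      rename_i c x y
      intro q₁ q₂ k hc h1 h2
      have hk1 : 1 ≤ (k : ℕ) := by omega
      have hkN : (k : ℕ) < N + 1 := k.isLt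
      set j : Fin N := ⟨(k : ℕ) - 1, by omega⟩ with hj
      have hjk : j.succ = k := by
        apply Fin.ext
        simp [hj, Fin.val_succ]
        omega
      have hr : insRule M₂ N q₁ q₂ j b ∈ rulesF M₁ M₂ N :=
        (mem_rulesF M₁ M₂ N).2 (Or.inr (Or.inr (Or.inl ⟨q₁, q₂, j, b, rfl⟩)))
      have hin : (Symbol.nonterminal (ULift.up (q₁, q₂, k)) : Symbol (Option α) (NTT.{0} σ₁ σ₂ N))
          = Symbol.nonterminal (insRule M₂ N q₁ q₂ j b).input := by
        simp [insRule, hjk]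
      have key : (gram M₁ M₂ N).Produces [Symbol.nonterminal (ULift.up (q₁, q₂, k))]
          (insRule M₂ N q₁ q₂ j b).output := by
        refine ⟨_, hr, ?_⟩
        rw [show [Symbol.nonterminal (ULift.up (q₁, q₂, k))] =
          [Symbol.nonterminal (insRule M₂ N q₁ q₂ j b).input] from by rw [← hin]]
        exact ContextFreeRule.Rewrites.input_output
      have h2' : M₂.evalFrom (M₂.step q₂ b) y ∈ M₂.accept := h2
      have ihd := ih q₁ (M₂.step q₂ b) j.castSucc (by simp [hj]; omega) h1 h2'
      have := ihd.append_right [Symbol.terminal (some b)]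
      refine key.trans_derives ?_
      simpa [insRule] using this
  | eq a h ih =>
      rename_i c x y
      intro q₁ q₂ k hc h1 h2
      have hr : eqRule M₁ M₂ N q₁ q₂ k a ∈ rulesF M₁ M₂ N :=
        (mem_rulesF M₁ M₂ N).2 (Or.inr (Or.inr (Or.inr (Or.inl ⟨q₁, q₂, k, a, rfl⟩))))
      have key : (gram M₁ M₂ N).Produces [Symbol.nonterminal (ULift.up (q₁, q₂, k))]
          (eqRule M₁ M₂ N q₁ q₂ k a).output :=
        ⟨_, hr, ContextFreeRule.Rewrites.input_output⟩
      have h1' : M₁.evalFrom (M₁.step q₁ a) x ∈ M₁.accept := h1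
      have h2' : M₂.evalFrom (M₂.step q₂ a) y ∈ M₂.accept := h2
      have ihd := ih (M₁.step q₁ a) (M₂.step q₂ a) k hc h1' h2'
      have := (ihd.append_left [Symbol.terminal (some a)]).append_right
        [Symbol.terminal (some a)]
      refine key.trans_derives ?_
      simpa [eqRule] using this
  | sub a b h ih =>
      rename_i c x y
      intro q₁ q₂ k hc h1 h2
      by_cases hab : a = b
      · subst hab
        have hr : eqRule M₁ M₂ N q₁ q₂ k a ∈ rulesF M₁ M₂ N :=
          (mem_rulesF M₁ M₂ N).2 (Or.inr (Or.inr (Or.inr (Or.inl ⟨q₁, q₂, k, a, rfl⟩))))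
        have key : (gram M₁ M₂ N).Produces [Symbol.nonterminal (ULift.up (q₁, q₂, k))]
            (eqRule M₁ M₂ N q₁ q₂ k a).output :=
          ⟨_, hr, ContextFreeRule.Rewrites.input_output⟩
        have h1' : M₁.evalFrom (M₁.step q₁ a) x ∈ M₁.accept := h1
        have h2' : M₂.evalFrom (M₂.step q₂ a) y ∈ M₂.accept := h2
        have ihd := ih (M₁.step q₁ a) (M₂.step q₂ a) k (by omega) h1' h2'
        have := (ihd.append_left [Symbol.terminal (some a)]).append_right
          [Symbol.terminal (some a)]
        refine key.trans_derives ?_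
        simpa [eqRule] using this
      · have hk1 : 1 ≤ (k : ℕ) := by omega
        have hkN : (k : ℕ) < N + 1 := k.isLt
        set j : Fin N := ⟨(k : ℕ) - 1, by omega⟩ with hj
        have hjk : j.succ = k := by
          apply Fin.ext
          simp [hj, Fin.val_succ]
          omega
        have hr : subRule M₁ M₂ N q₁ q₂ j a b ∈ rulesF M₁ M₂ N :=
          (mem_rulesF M₁ M₂ N).2 (Or.inr (Or.inr (Or.inr (Or.inr ⟨q₁, q₂, j, a, b, hab, rfl⟩))))
        have hin : (Symbol.nonterminal (ULift.up (q₁, q₂, k)) : Symbol (Option α) (NTT.{0} σ₁ σ₂ N))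
            = Symbol.nonterminal (subRule M₁ M₂ N q₁ q₂ j a b).input := by
          simp [subRule, hjk]
        have key : (gram M₁ M₂ N).Produces [Symbol.nonterminal (ULift.up (q₁, q₂, k))]
            (subRule M₁ M₂ N q₁ q₂ j a b).output := by
          refine ⟨_, hr, ?_⟩
          rw [show [Symbol.nonterminal (ULift.up (q₁, q₂, k))] =
            [Symbol.nonterminal (subRule M₁ M₂ N q₁ q₂ j a b).input] from by rw [← hin]]
          exact ContextFreeRule.Rewrites.input_output
        have h1' : M₁.evalFrom (M₁.step q₁ a) x ∈ M₁.accept := h1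
        have h2' : M₂.evalFrom (M₂.step q₂ b) y ∈ M₂.accept := h2
        have ihd := ih (M₁.step q₁ a) (M₂.step q₂ b) j.castSucc (by simp [hj]; omega) h1' h2'
        have := (ihd.append_left [Symbol.terminal (some a)]).append_right
          [Symbol.terminal (some b)]
        refine key.trans_derives ?_
        simpa [subRule] using this

/-- terminal string coming from a word over `α` -/
def tm {NN : Type*} (x : List α) : List (Symbol (Option α) NN) :=
  x.map fun a => Symbol.terminal (some a)

lemma split_nt {S NN : Type*} :
    ∀ (xs : List (Symbol S NN)) (p : List (Symbol S NN)) {ys q : List (Symbol S NN)} {A B : NN},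
    (∀ s ∈ xs, ∃ t, s = Symbol.terminal t) → (∀ s ∈ ys, ∃ t, s = Symbol.terminal t) →
    xs ++ Symbol.nonterminal A :: ys = p ++ Symbol.nonterminal B :: q →
    p = xs ∧ B = A ∧ q = ys := by
  intro xs
  induction xs with
  | nil =>
      intro p ys q A B hx hy h
      cases p with
      | nil =>
          simp only [List.nil_append] at h
          obtain ⟨h1, h2⟩ := List.cons.injEq .. ▸ h
          exact ⟨rfl, (Symbol.nonterminal.injEq .. ▸ h1).symm ▸ rfl, h2.symm⟩
      | cons s p' =>
          simp only [List.nil_append, List.cons_append] at h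
          obtain ⟨h1, h2⟩ := List.cons.injEq .. ▸ h
          exfalso
          have hmem : (Symbol.nonterminal B : Symbol S NN) ∈ ys := by
            rw [h2]
            exact List.mem_append.2 (Or.inr (List.mem_cons_self))
          obtain ⟨t, ht⟩ := hy _ hmem
          simp at ht
  | cons s xs' ih =>
      intro p ys q A B hx hy h
      cases p with
      | nil =>
          simp only [List.cons_append, List.nil_append] at h
          obtain ⟨h1, h2⟩ := List.cons.injEq .. ▸ h
          exfalso
          obtain ⟨t, ht⟩ := hx s (List.mem_cons_self)
          rw [ht] at h1
          simp at h1
      | cons u p' =>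
          simp only [List.cons_append] at h
          obtain ⟨h1, h2⟩ := List.cons.injEq .. ▸ h
          obtain ⟨hp, hB, hq⟩ := ih p' (fun s hs => hx s (List.mem_cons_of_mem _ hs)) hy h2
          exact ⟨by rw [hp, h1], hB, hq⟩

def InvP (s : List (Symbol (Option α) (NTT.{0} σ₁ σ₂ N))) : Prop :=
  (∃ (x y : List α) (q₁ : σ₁) (q₂ : σ₂) (k : Fin (N + 1)) (c : ℕ),
    s = tm (NN := NTT.{0} σ₁ σ₂ N) x ++
      Symbol.nonterminal (ULift.up (q₁, q₂, k)) :: (tm (NN := NTT.{0} σ₁ σ₂ N) y).reverse ∧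
    M₁.evalFrom M₁.start x = q₁ ∧ M₂.evalFrom M₂.start y = q₂ ∧ Al c x y ∧ c + (k : ℕ) ≤ N) ∨
  (∃ (x y : List α) (c : ℕ),
    s = List.map Symbol.terminal (x.map some ++ none :: (y.map some).reverse) ∧
    M₁.evalFrom M₁.start x ∈ M₁.accept ∧ M₂.evalFrom M₂.start y ∈ M₂.accept ∧
    Al c x y ∧ c ≤ N)

lemma invP_step {s t : List (Symbol (Option α) (NTT.{0} σ₁ σ₂ N))}
    (hst : (gram M₁ M₂ N).Produces s t) (hs : InvP M₁ M₂ N s) : InvP M₁ M₂ N t := by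
  obtain ⟨r, hr, hrw⟩ := hst
  rw [mem_rulesF] at hr
  obtain ⟨p, q, hu, hv⟩ := hrw.exists_parts
  rcases hs with ⟨x, y, q₁, q₂, k, c, hform, he1, he2, hal, hcN⟩ | ⟨x, y, c, hform, _, _, _, _⟩
  · -- the single nonterminal must be the rewritten one
    rw [hform] at hu
    rw [List.append_assoc, List.singleton_append] at hu
    obtain ⟨hp, hinput, hq⟩ := split_nt (tm x) p
      (fun s hs => by
        simp only [tm, List.mem_map] at hs
        obtain ⟨a, _, ha⟩ := hs
        exact ⟨some a, ha.symm⟩)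
      (fun s hs => by
        simp only [List.mem_reverse, tm, List.mem_map] at hs
        obtain ⟨a, _, ha⟩ := hs
        exact ⟨some a, ha.symm⟩) hu
    subst hp hq
    rcases hr with ⟨a₁, a₂, k', ⟨hacc1, hacc2⟩, hreq⟩ | ⟨a₁, a₂, j, a, hreq⟩ |
        ⟨a₁, a₂, j, b, hreq⟩ | ⟨a₁, a₂, k', a, hreq⟩ | ⟨a₁, a₂, j, a, b, hab, hreq⟩
    · -- finish rule
      subst hreq
      simp only [finRule] at hinput hv
      have hinput' := congrArg ULift.down hinput
      rw [Prod.mk.injEq, Prod.mk.injEq] at hinput'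
      obtain ⟨h1, h2, h3⟩ := hinput'
      subst h1 h2
      refine Or.inr ⟨x, y, c, ?_, he1 ▸ hacc1, he2 ▸ hacc2, hal, by omega⟩
      rw [hv]
      simp [tm, Function.comp_def]
    · -- delete rule
      subst hreq
      simp only [delRule] at hinput hv
      have hinput' := congrArg ULift.down hinput
      rw [Prod.mk.injEq, Prod.mk.injEq] at hinput'
      obtain ⟨h1, h2, h3⟩ := hinput'
      subst h1 h2
      refine Or.inl ⟨x ++ [a], y, M₁.step a₁ a, a₂, j.castSucc, c + 1, ?_,
        by rw [DFA.evalFrom_append_singleton, he1], he2, hal.snoc_del a, ?_⟩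
      · rw [hv]
        simp [tm]
      · have : (j.succ : ℕ) = (k : ℕ) := by rw [h3]
        simp only [Fin.coe_castSucc]
        simp [Fin.val_succ] at this
        omega
    · -- insert rule
      subst hreq
      simp only [insRule] at hinput hv
      have hinput' := congrArg ULift.down hinput
      rw [Prod.mk.injEq, Prod.mk.injEq] at hinput'
      obtain ⟨h1, h2, h3⟩ := hinput'
      subst h1 h2
      refine Or.inl ⟨x, y ++ [b], a₁, M₂.step a₂ b, j.castSucc, c + 1, ?_,
        he1, by rw [DFA.evalFrom_append_singleton, he2], hal.snoc_ins b, ?_⟩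
      · rw [hv]
        simp [tm]
      · have : (j.succ : ℕ) = (k : ℕ) := by rw [h3]
        simp only [Fin.coe_castSucc]
        simp [Fin.val_succ] at this
        omega
    · -- equal rule
      subst hreq
      simp only [eqRule] at hinput hv
      have hinput' := congrArg ULift.down hinput
      rw [Prod.mk.injEq, Prod.mk.injEq] at hinput'
      obtain ⟨h1, h2, h3⟩ := hinput'
      subst h1 h2 h3
      refine Or.inl ⟨x ++ [a], y ++ [a], M₁.step a₁ a, M₂.step a₂ a, k', c, ?_,
        by rw [DFA.evalFrom_append_singleton, he1],
        by rw [DFA.evalFrom_append_singleton, he2], hal.snoc_eq a, hcN⟩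
      rw [hv]
      simp [tm]
    · -- substitute rule
      subst hreq
      simp only [subRule] at hinput hv
      have hinput' := congrArg ULift.down hinput
      rw [Prod.mk.injEq, Prod.mk.injEq] at hinput'
      obtain ⟨h1, h2, h3⟩ := hinput'
      subst h1 h2
      refine Or.inl ⟨x ++ [a], y ++ [b], M₁.step a₁ a, M₂.step a₂ b, j.castSucc, c + 1, ?_,
        by rw [DFA.evalFrom_append_singleton, he1],
        by rw [DFA.evalFrom_append_singleton, he2], hal.snoc_sub a b, ?_⟩
      · rw [hv]
        simp [tm]
      · have : (j.succ : ℕ) = (k : ℕ) := by rw [h3]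
        simp only [Fin.coe_castSucc]
        simp [Fin.val_succ] at this
        omega
  · -- all-terminal string: no rewriting possible
    exfalso
    rw [hform] at hu
    have hmem : (Symbol.nonterminal r.input : Symbol (Option α) (NTT.{0} σ₁ σ₂ N)) ∈
        List.map Symbol.terminal (x.map some ++ none :: (y.map some).reverse) := by
      rw [hu]
      exact List.mem_append.2 (Or.inl (List.mem_append.2 (Or.inr (List.mem_singleton_self _))))
    simp at hmem

lemma invP_derives {s t : List (Symbol (Option α) (NTT.{0} σ₁ σ₂ N))}
    (hst : (gram M₁ M₂ N).Derives s t) (hs : InvP M₁ M₂ N s) : InvP M₁ M₂ N t := by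
  induction hst with
  | refl => exact hs
  | tail _ hlast ih => exact invP_step M₁ M₂ N hlast ih

end Grammar

end EDLin

open EDLin in
/-- Let `Σ` be a finite alphabet, `#` a fresh symbol (the terminal alphabet `Σ ∪ {#}` is
modelled as `Option α`, with `# = none`), `N` a natural number, and `L₁, L₂ ⊆ Σ*` regular
languages.  Then `{ x · # · reverse(y) : x ∈ L₁, y ∈ L₂, editDistance x y ≤ N }` is
generated by a linear (ε-free) context-free grammar. -/
theorem editDistance_inter_regular_isLinear
    {α : Type} [Fintype α] [DecidableEq α] (N : ℕ) (L₁ L₂ : Language α)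
    (h₁ : L₁.IsRegular) (h₂ : L₂.IsRegular) :
    ∃ g : ContextFreeGrammar (Option α),
      IsLinearCFG g ∧ (∀ r ∈ g.rules, r.output ≠ []) ∧
      g.language =
        { w : List (Option α) | ∃ x y : List α,
            x ∈ L₁ ∧ y ∈ L₂ ∧
            levenshtein Levenshtein.defaultCost x y ≤ N ∧
            w = x.map some ++ none :: (y.map some).reverse } := by
  obtain ⟨σ₁, _, M₁, hM₁⟩ := h₁
  obtain ⟨σ₂, _, M₂, hM₂⟩ := h₂
  refine ⟨gram M₁ M₂ N, ?_, ?_, ?_⟩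
  · -- linearity
    intro r hr
    have hr := (mem_rulesF M₁ M₂ N).1 hr
    rcases hr with ⟨q₁, q₂, k, _, hreq⟩ | ⟨q₁, q₂, j, a, hreq⟩ |
        ⟨q₁, q₂, j, b, hreq⟩ | ⟨q₁, q₂, k, a, hreq⟩ | ⟨q₁, q₂, j, a, b, _, hreq⟩ <;>
      subst hreq <;> simp [finRule, delRule, insRule, eqRule, subRule]
  · -- ε-freeness
    intro r hr
    have hr := (mem_rulesF M₁ M₂ N).1 hr
    rcases hr with ⟨q₁, q₂, k, _, hreq⟩ | ⟨q₁, q₂, j, a, hreq⟩ |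
        ⟨q₁, q₂, j, b, hreq⟩ | ⟨q₁, q₂, k, a, hreq⟩ | ⟨q₁, q₂, j, a, b, _, hreq⟩ <;>
      subst hreq <;> simp [finRule, delRule, insRule, eqRule, subRule]
  · ext w
    constructor
    · -- hard direction
      intro hw
      rw [ContextFreeGrammar.mem_language_iff] at hw
      have hinit : InvP M₁ M₂ N [Symbol.nonterminal (ULift.up (M₁.start, M₂.start, Fin.last N))] :=
        Or.inl ⟨[], [], M₁.start, M₂.start, Fin.last N, 0, by simp [tm], rfl, rfl, Al.nil 0,
          by simp [Fin.val_last]⟩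
      have hinvP := invP_derives M₁ M₂ N hw hinit
      rcases hinvP with ⟨x, y, q₁, q₂, k, c, hform, _, _, _, _⟩ | ⟨x, y, c, hform, ha1, ha2, hal, hcN⟩
      · exfalso
        have hmem : (Symbol.nonterminal (ULift.up (q₁, q₂, k)) :
            Symbol (Option α) (NTT.{0} σ₁ σ₂ N)) ∈ List.map Symbol.terminal w := by
          rw [hform]
          exact List.mem_append.2 (Or.inr (List.mem_cons_self))
        simp at hmem
      · have hw' : w = x.map some ++ none :: (y.map some).reverse := by
          have hinj : Function.Injective
              (Symbol.terminal : Option α → Symbol (Option α) (NTT.{0} σ₁ σ₂ N)) := by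
            intro a b h
            simpa using h
          exact List.map_injective_iff.2 hinj hform
        refine ⟨x, y, ?_, ?_, le_trans (lev_le_of_al hal) hcN, hw'⟩
        · rw [← hM₁]
          exact (DFA.mem_accepts _).mpr ha1
        · rw [← hM₂]
          exact (DFA.mem_accepts _).mpr ha2
    · -- easy direction
      rintro ⟨x, y, hx, hy, hlev, rfl⟩
      rw [ContextFreeGrammar.mem_language_iff]
      have ha1 : M₁.evalFrom M₁.start x ∈ M₁.accept := by
        have : x ∈ M₁.accepts := by rw [hM₁]; exact hx
        exact (DFA.mem_accepts _).mp this
      have ha2 : M₂.evalFrom M₂.start y ∈ M₂.accept := by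
        have : y ∈ M₂.accepts := by rw [hM₂]; exact hy
        exact (DFA.mem_accepts _).mp this
      exact derives_of_al M₁ M₂ N (al_lev x y) M₁.start M₂.start (Fin.last N)
        (by simpa [Fin.val_last] using hlev) ha1 ha2
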